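/- arXiv:2405.08985 — 3 statements merged into one kernel-verified Lean document; each statement's English description precedes it below -/
import Mathlib

section
/- Let G_φ be the mapping torus group of an injective endomorphism φ : F → F of a free group F, with stable letter t. For any u ∈ F and any integer m ≥ 1, the subgroup ⟨u t^m, F⟩ of G_φ equals ⟨t^m, F⟩ and has index m in G_φ; moreover, setting s = u t^m, this subgroup is isomorphic to the mapping torus group G_ψ of the injective endomorphism ψ : F → F defined by ψ(x) = u φ^m(x) u⁻¹, via an isomorphism that restricts to the identity on F and sends the stable letter of G_ψ to s. -/
/-- The set of relators for the mapping torus (ascending HNN extension) of an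
endomorphism `ψ : G →* G`: generators are the elements of `G` together with one
stable letter `t`, relators are the multiplication table of `G` together with
`t g t⁻¹ = ψ g` for all `g : G`. -/
def mappingTorusRels (G : Type*) [Group G] (ψ : G →* G) : Set (FreeGroup (G ⊕ Unit)) :=
  (Set.range fun p : G × G =>
      FreeGroup.of (Sum.inl p.1) * FreeGroup.of (Sum.inl p.2) *
        (FreeGroup.of (Sum.inl (p.1 * p.2)))⁻¹) ∪
  (Set.range fun g : G =>
      FreeGroup.of (Sum.inr ()) * FreeGroup.of (Sum.inl g) * (FreeGroup.of (Sum.inr ()))⁻¹ *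
        (FreeGroup.of (Sum.inl (ψ g)))⁻¹)

/-- The mapping torus group `G_ψ = ⟨G, t | t x t⁻¹ = ψ(x), x ∈ G⟩` of an endomorphism
`ψ : G →* G`. -/
abbrev MappingTorus {G : Type*} [Group G] (ψ : G →* G) : Type _ :=
  PresentedGroup (mappingTorusRels G ψ)

/-- The canonical homomorphism of the base group into the mapping torus. -/
def MappingTorus.base {G : Type*} [Group G] (ψ : G →* G) : G →* MappingTorus ψ :=
  MonoidHom.mk' (fun g => PresentedGroup.of (rels := mappingTorusRels G ψ) (Sum.inl g))
    (by
      intro g h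
      have key : PresentedGroup.mk (mappingTorusRels G ψ)
          (FreeGroup.of (Sum.inl g) * FreeGroup.of (Sum.inl h) *
            (FreeGroup.of (Sum.inl (g * h)))⁻¹) = 1 := by
        apply (QuotientGroup.eq_one_iff _).mpr
        exact Subgroup.subset_normalClosure (Or.inl ⟨(g, h), rfl⟩)
      rw [map_mul, map_mul, map_inv, mul_inv_eq_one] at key
      exact key.symm)

/-- The stable letter `t` of the mapping torus. -/
def MappingTorus.stable {G : Type*} [Group G] (ψ : G →* G) : MappingTorus ψ :=
  PresentedGroup.of (Sum.inr ())

/-- A subgroup is generated by two elements. -/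
def TwoGenerated {Γ : Type*} [Group Γ] (H : Subgroup Γ) : Prop :=
  ∃ x y : Γ, H = Subgroup.closure {x, y}

/-- A group is free (on some basis). -/
def IsFree (Γ : Type*) [Group Γ] : Prop :=
  ∃ S : Set Γ, Nonempty (FreeGroup S ≃* Γ)

/-- `iterateHom φ m` is the `m`-th power `φ^m` of the endomorphism `φ` under composition. -/
def iterateHom {Γ : Type*} [Group Γ] (φ : Γ →* Γ) : ℕ → (Γ →* Γ)
  | 0 => MonoidHom.id Γ
  | n + 1 => φ.comp (iterateHom φ n)

/-- `H` is a finitary sub-mapping torus subgroup of the mapping torus of `φ`: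
`H = ⟨s, V⟩` where `s = u t^m`, `u ∈ F`, `m ≥ 1`, `V ≤ F` nontrivial finitely generated
and `s V s⁻¹ ≤ V`. -/
def IsSubMappingTorus {α : Type*} (φ : FreeGroup α →* FreeGroup α)
    (H : Subgroup (MappingTorus φ)) : Prop :=
  ∃ (u : FreeGroup α) (m : ℕ) (V : Subgroup (FreeGroup α)),
    1 ≤ m ∧ V ≠ ⊥ ∧ V.FG ∧
    H = Subgroup.closure (insert (MappingTorus.base φ u * MappingTorus.stable φ ^ m)
          ((V.map (MappingTorus.base φ) : Subgroup (MappingTorus φ)) : Set (MappingTorus φ))) ∧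
    ∀ g ∈ V.map (MappingTorus.base φ),
      (MappingTorus.base φ u * MappingTorus.stable φ ^ m) * g *
        (MappingTorus.base φ u * MappingTorus.stable φ ^ m)⁻¹ ∈ V.map (MappingTorus.base φ)

/-- `U` is a free factor of `Γ`: there is a subgroup `W` such that `Γ` is the internal
free product of `U` and `W`, i.e. the canonical map `U ∗ W → Γ` is an isomorphism. -/
def IsFreeFactor {Γ : Type*} [Group Γ] (U : Subgroup Γ) : Prop :=
  ∃ W : Subgroup Γ, Function.Bijective (Monoid.Coprod.lift U.subtype W.subtype)

/-- The outer class of the automorphism `φ` is fully irreducible: no positive power of `φ`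
maps a nontrivial proper free factor to a conjugate of itself. -/
def FullyIrreducible {Γ : Type*} [Group Γ] (φ : MulAut Γ) : Prop :=
  ¬ ∃ (p : ℕ) (U : Subgroup Γ) (g : Γ), 1 ≤ p ∧ U ≠ ⊥ ∧ U ≠ ⊤ ∧ IsFreeFactor U ∧
      U.map (φ ^ p).toMonoidHom = U.map (MulAut.conj g).toMonoidHom

/-- The automorphism `φ` is atoroidal: no positive power of `φ` fixes a nontrivial
conjugacy class. -/
def Atoroidal {Γ : Type*} [Group Γ] (φ : MulAut Γ) : Prop :=
  ¬ ∃ (p : ℕ) (u : Γ), 1 ≤ p ∧ u ≠ 1 ∧ IsConj ((φ ^ p) u) u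

/-- The single relator `b a b⁻¹ a` of the Klein bottle group `⟨a, b | b a b⁻¹ = a⁻¹⟩`. -/
def kleinBottleRels : Set (FreeGroup (Fin 2)) :=
  {FreeGroup.of 1 * FreeGroup.of 0 * (FreeGroup.of 1)⁻¹ * FreeGroup.of 0}

/-- The Klein bottle group `BS(1,-1) = ⟨a, b | b a b⁻¹ = a⁻¹⟩`. -/
abbrev KleinBottleGroup : Type := PresentedGroup kleinBottleRels

/-- `Γ` is a free abelian group of rank `n`. -/
def FreeAbelianOfRank (Γ : Type*) [Group Γ] (n : ℕ) : Prop :=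
  Nonempty (Γ ≃* Multiplicative (Fin n → ℤ))

section Basic
variable {G : Type*} [Group G] (ψ : G →* G)

lemma MappingTorus.stable_conj (g : G) :
    stable ψ * base ψ g * (stable ψ)⁻¹ = base ψ (ψ g) := by
  have key : PresentedGroup.mk (mappingTorusRels G ψ)
      (FreeGroup.of (Sum.inr ()) * FreeGroup.of (Sum.inl g) * (FreeGroup.of (Sum.inr ()))⁻¹ *
        (FreeGroup.of (Sum.inl (ψ g)))⁻¹) = 1 := by
    apply (QuotientGroup.eq_one_iff _).mpr
    exact Subgroup.subset_normalClosure (Or.inr ⟨g, rfl⟩)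
  rw [map_mul, map_mul, map_mul, map_inv, map_inv, mul_inv_eq_one] at key
  exact key

lemma MappingTorus.stable_pow_conj (k : ℕ) (g : G) :
    stable ψ ^ k * base ψ g * (stable ψ ^ k)⁻¹ = base ψ (iterateHom ψ k g) := by
  induction k with
  | zero => simp [iterateHom]
  | succ n ih =>
    have : stable ψ ^ (n+1) = stable ψ * stable ψ ^ n := by rw [pow_succ']
    rw [this, mul_inv_rev, iterateHom]
    calc stable ψ * stable ψ ^ n * base ψ g * ((stable ψ ^ n)⁻¹ * (stable ψ)⁻¹)
        = stable ψ * (stable ψ ^ n * base ψ g * (stable ψ ^ n)⁻¹) * (stable ψ)⁻¹ := by group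
      _ = stable ψ * base ψ (iterateHom ψ n g) * (stable ψ)⁻¹ := by rw [ih]
      _ = _ := stable_conj ψ _

end Basic

section Index
variable {G : Type*} [Group G] (ψ : G →* G) (u : G) (m : ℕ)

/-- The homomorphism to Z/m sending the base group to 0 and the stable letter to 1. -/
def mtPi : MappingTorus ψ →* Multiplicative (ZMod m) :=
  PresentedGroup.toGroup (f := Sum.elim (fun _ => 1) fun _ => Multiplicative.ofAdd 1)
    (by
      rintro r (⟨p, rfl⟩ | ⟨g, rfl⟩) <;> simp)

@[simp] lemma mtPi_base (g : G) : mtPi ψ m (MappingTorus.base ψ g) = 1 :=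
  PresentedGroup.toGroup.of _

@[simp] lemma mtPi_stable : mtPi ψ m (MappingTorus.stable ψ) = Multiplicative.ofAdd 1 :=
  PresentedGroup.toGroup.of _

lemma mtPi_surjective (hm : 1 ≤ m) : Function.Surjective (mtPi ψ m) := by
  intro k
  refine ⟨MappingTorus.stable ψ ^ (Multiplicative.toAdd k).val, ?_⟩
  rw [map_pow, mtPi_stable]
  have : ((Multiplicative.toAdd k).val : ZMod m) = Multiplicative.toAdd k := by
    haveI : NeZero m := ⟨by omega⟩
    exact ZMod.natCast_val _ |>.trans (ZMod.cast_id _ _)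
  rw [← ofAdd_nsmul]
  simp [this]

variable {ψ u m}

namespace MTIndex

variable (hm : 1 ≤ m)

abbrev Hgp (ψ : G →* G) (u : G) (m : ℕ) : Subgroup (MappingTorus ψ) :=
  Subgroup.closure (insert (MappingTorus.base ψ u * MappingTorus.stable ψ ^ m)
    (Set.range (MappingTorus.base ψ)))

lemma base_mem (g : G) : MappingTorus.base ψ g ∈ Hgp ψ u m :=
  Subgroup.subset_closure (Set.mem_insert_of_mem _ ⟨g, rfl⟩)

lemma s_mem : MappingTorus.base ψ u * MappingTorus.stable ψ ^ m ∈ Hgp ψ u m :=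
  Subgroup.subset_closure (Set.mem_insert _ _)

lemma tm_mem : MappingTorus.stable ψ ^ m ∈ Hgp ψ u m := by
  have := Subgroup.mul_mem _ (Subgroup.inv_mem _ (base_mem (u := u) (m := m) u)) (s_mem (ψ := ψ) (u := u) (m := m))
  rwa [inv_mul_cancel_left] at this

lemma conj_mem {h : MappingTorus ψ} (hh : h ∈ Hgp ψ u m) :
    MappingTorus.stable ψ * h * (MappingTorus.stable ψ)⁻¹ ∈ Hgp ψ u m := by
  revert h
  have : (Hgp ψ u m).map ((MulAut.conj (MappingTorus.stable ψ)).toMonoidHom) ≤ Hgp ψ u m := by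
    rw [Subgroup.map_le_iff_le_comap, Subgroup.closure_le]
    rintro x (rfl | ⟨g, rfl⟩)
    · show MappingTorus.stable ψ * _ * (MappingTorus.stable ψ)⁻¹ ∈ Hgp ψ u m
      have : MappingTorus.stable ψ * (MappingTorus.base ψ u * MappingTorus.stable ψ ^ m) *
          (MappingTorus.stable ψ)⁻¹ = MappingTorus.base ψ (ψ u) * (MappingTorus.base ψ u)⁻¹ *
            (MappingTorus.base ψ u * MappingTorus.stable ψ ^ m) := by
        rw [← MappingTorus.stable_conj ψ u]; group
      rw [this]
      exact Subgroup.mul_mem _ (Subgroup.mul_mem _ (base_mem _) (Subgroup.inv_mem _ (base_mem _))) s_mem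
    · show MappingTorus.stable ψ * _ * (MappingTorus.stable ψ)⁻¹ ∈ Hgp ψ u m
      rw [MappingTorus.stable_conj]
      exact base_mem _
  intro h hh
  exact this ⟨h, hh, rfl⟩

lemma conj_pow_mem (k : ℕ) {h : MappingTorus ψ} (hh : h ∈ Hgp ψ u m) :
    MappingTorus.stable ψ ^ k * h * (MappingTorus.stable ψ ^ k)⁻¹ ∈ Hgp ψ u m := by
  induction k with
  | zero => simpa using hh
  | succ n ih =>
    have e : MappingTorus.stable ψ ^ (n+1) * h * (MappingTorus.stable ψ ^ (n+1))⁻¹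
        = MappingTorus.stable ψ * (MappingTorus.stable ψ ^ n * h * (MappingTorus.stable ψ ^ n)⁻¹) *
          (MappingTorus.stable ψ)⁻¹ := by
      rw [pow_succ']; group
    rw [e]
    exact conj_mem ih

lemma pow_mod_mem (hm : 1 ≤ m) (n : ℕ) :
    MappingTorus.stable ψ ^ n * (MappingTorus.stable ψ ^ (n % m))⁻¹ ∈ Hgp ψ u m := by
  have h : MappingTorus.stable ψ ^ n
      = (MappingTorus.stable ψ ^ m) ^ (n / m) * MappingTorus.stable ψ ^ (n % m) := by
    rw [← pow_mul, ← pow_add, Nat.div_add_mod]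
  rw [h, mul_inv_cancel_right]
  exact Subgroup.pow_mem _ tm_mem _

lemma covering (hm : 1 ≤ m) (g : MappingTorus ψ) :
    ∃ r : ℕ, r < m ∧ g * (MappingTorus.stable ψ ^ r)⁻¹ ∈ Hgp ψ u m := by
  have main : ∀ z : FreeGroup (G ⊕ Unit), ∃ r : ℕ, r < m ∧
      PresentedGroup.mk (mappingTorusRels G ψ) z * (MappingTorus.stable ψ ^ r)⁻¹ ∈ Hgp ψ u m := by
    intro z
    induction z using FreeGroup.induction_on with
    | C1 => exact ⟨0, by omega, by simpa using Subgroup.one_mem _⟩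
    | of x =>
      match x with
      | Sum.inl a =>
        exact ⟨0, by omega, by simp only [pow_zero, inv_one, mul_one]; exact base_mem (u := u) (m := m) a⟩
      | Sum.inr () =>
        refine ⟨1 % m, Nat.mod_lt _ (by omega), ?_⟩
        have := pow_mod_mem (u := u) (ψ := ψ) hm 1
        simp only [pow_one] at this
        exact this
    | inv_of x ih =>
      match x with
      | Sum.inl a =>
        refine ⟨0, by omega, ?_⟩
        rw [map_inv]
        have h1 : PresentedGroup.mk (mappingTorusRels G ψ) (FreeGroup.of (Sum.inl a))
            = MappingTorus.base ψ a := rfl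
        rw [h1]
        simpa using Subgroup.inv_mem _ (base_mem a)
      | Sum.inr () =>
        refine ⟨(m - 1) % m, Nat.mod_lt _ (by omega), ?_⟩
        rw [map_inv]
        have h1 : PresentedGroup.mk (mappingTorusRels G ψ) (FreeGroup.of (Sum.inr ()))
            = MappingTorus.stable ψ := rfl
        rw [h1, ← mul_inv_rev, ← pow_succ]
        have h3 : (m - 1) % m + 1 = m := by
          have : m - 1 < m := by omega
          rw [Nat.mod_eq_of_lt this]; omega
        rw [h3]
        exact Subgroup.inv_mem _ tm_mem
    | mul x y ihx ihy =>
      obtain ⟨r1, hr1, h1⟩ := ihx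
      obtain ⟨r2, hr2, h2⟩ := ihy
      refine ⟨(r1 + r2) % m, Nat.mod_lt _ (by omega), ?_⟩
      rw [map_mul]
      set t := MappingTorus.stable ψ with ht
      set X := PresentedGroup.mk (mappingTorusRels G ψ) x with hX
      set Y := PresentedGroup.mk (mappingTorusRels G ψ) y with hY
      have key : X * Y * (t ^ ((r1+r2) % m))⁻¹
          = (X * (t ^ r1)⁻¹) * (t ^ r1 * (Y * (t ^ r2)⁻¹) * (t ^ r1)⁻¹) *
            (t ^ (r1 + r2) * (t ^ ((r1+r2) % m))⁻¹) := by
        rw [pow_add]; group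
      rw [key]
      exact Subgroup.mul_mem _ (Subgroup.mul_mem _ h1 (conj_pow_mem r1 h2)) (pow_mod_mem hm _)
  induction g using QuotientGroup.induction_on with
  | H z => exact main z

lemma Hgp_le_ker (hm : 1 ≤ m) : Hgp ψ u m ≤ (mtPi ψ m).ker := by
  rw [Subgroup.closure_le]
  rintro x (rfl | ⟨g, rfl⟩)
  · show mtPi ψ m _ = 1
    rw [map_mul, map_pow, mtPi_base, mtPi_stable, one_mul, ← ofAdd_nsmul]
    simp
  · show mtPi ψ m _ = 1
    simp

lemma Hgp_eq_ker (hm : 1 ≤ m) : Hgp ψ u m = (mtPi ψ m).ker := by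
  apply le_antisymm (Hgp_le_ker hm)
  intro g hg
  obtain ⟨r, hr, hmem⟩ := covering (u := u) hm g
  replace hg : mtPi ψ m g = 1 := hg
  have h1 : mtPi ψ m (g * (MappingTorus.stable ψ ^ r)⁻¹) = 1 := Hgp_le_ker hm hmem
  rw [map_mul, map_inv, map_pow, mtPi_stable, hg, one_mul, inv_eq_one, ← ofAdd_nsmul] at h1
  have h2 : ((r : ℕ) : ZMod m) = 0 := by
    simpa using congrArg Multiplicative.toAdd h1
  have h3 : r = 0 := Nat.eq_zero_of_dvd_of_lt ((ZMod.natCast_eq_zero_iff r m).mp h2) hr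
  rw [h3] at hmem
  simpa using hmem

lemma Hgp_index (hm : 1 ≤ m) : (Hgp ψ u m).index = m := by
  haveI : NeZero m := ⟨by omega⟩
  rw [Hgp_eq_ker hm, Subgroup.index_ker,
    MonoidHom.range_eq_top.mpr (mtPi_surjective ψ m hm)]
  rw [Nat.card_congr (Subgroup.topEquiv).toEquiv]
  rw [Nat.card_congr Multiplicative.toAdd]
  exact Nat.card_zmod m

end MTIndex
end Index

section Part3
variable {G : Type*} [Group G]

/-- Shift action of `ZMod m` on `ZMod m → W`. -/
def shiftAut (W : Type*) [Group W] (m : ℕ) : Multiplicative (ZMod m) →* MulAut (ZMod m → W) where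
  toFun k :=
    { toFun := fun f j => f (j + k.toAdd)
      invFun := fun f j => f (j - k.toAdd)
      left_inv := fun f => funext fun j => by simp
      right_inv := fun f => funext fun j => by simp
      map_mul' := fun f g => rfl }
  map_one' := by
    apply MulEquiv.ext; intro f; funext j; simp
  map_mul' := fun k l => by
    apply MulEquiv.ext; intro f; funext j
    change f _ = f _
    congr 1
    rw [toAdd_mul, add_assoc]

@[simp] lemma shiftAut_apply (W : Type*) [Group W] (m : ℕ) (k : Multiplicative (ZMod m))
    (f : ZMod m → W) (j : ZMod m) : shiftAut W m k f j = f (j + Multiplicative.toAdd k) := rfl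

variable (φ : G →* G) (u : G) (m : ℕ)

/-- The twisted endomorphism `x ↦ u φ^m(x) u⁻¹`. -/
abbrev twisted : G →* G := (MulAut.conj u).toMonoidHom.comp (iterateHom φ m)

lemma twisted_apply (x : G) : twisted φ u m x = u * iterateHom φ m x * u⁻¹ := rfl

/-- The homomorphism from the mapping torus of the twisted map into that of `φ`. -/
def mtPhi : MappingTorus (twisted φ u m) →* MappingTorus φ :=
  PresentedGroup.toGroup
    (f := Sum.elim (fun g => MappingTorus.base φ g)
      (fun _ => MappingTorus.base φ u * MappingTorus.stable φ ^ m))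
    (by
      rintro r (⟨p, rfl⟩ | ⟨g, rfl⟩)
      · simp only [map_mul, map_inv, FreeGroup.lift_apply_of, Sum.elim_inl]
        group
      · simp only [map_mul, map_inv, FreeGroup.lift_apply_of, Sum.elim_inl, Sum.elim_inr]
        rw [twisted_apply, mul_inv_eq_one]
        have h1 : MappingTorus.base φ u * MappingTorus.stable φ ^ m * MappingTorus.base φ g *
            (MappingTorus.base φ u * MappingTorus.stable φ ^ m)⁻¹
            = MappingTorus.base φ u * (MappingTorus.stable φ ^ m * MappingTorus.base φ g *
              (MappingTorus.stable φ ^ m)⁻¹) * (MappingTorus.base φ u)⁻¹ := by group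
        rw [h1, MappingTorus.stable_pow_conj, ← map_inv, ← map_mul, ← map_mul])

@[simp] lemma mtPhi_base (g : G) :
    mtPhi φ u m (MappingTorus.base (twisted φ u m) g) = MappingTorus.base φ g :=
  PresentedGroup.toGroup.of _

@[simp] lemma mtPhi_stable :
    mtPhi φ u m (MappingTorus.stable (twisted φ u m))
      = MappingTorus.base φ u * MappingTorus.stable φ ^ m :=
  PresentedGroup.toGroup.of _

lemma mtPhi_range :
    (mtPhi φ u m).range = Subgroup.closure
      (insert (MappingTorus.base φ u * MappingTorus.stable φ ^ m)
        (Set.range (MappingTorus.base φ))) := by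
  rw [MonoidHom.range_eq_map, ← PresentedGroup.closure_range_of (mappingTorusRels G (twisted φ u m)),
    MonoidHom.map_closure, ← Set.range_comp]
  congr 1
  ext z
  constructor
  · rintro ⟨a | ⟨⟩, rfl⟩
    · refine Set.mem_insert_of_mem _ ⟨a, ?_⟩
      show MappingTorus.base φ a = mtPhi φ u m (MappingTorus.base (twisted φ u m) a)
      simp
    · left
      show mtPhi φ u m (MappingTorus.stable (twisted φ u m)) = _
      simp
  · rintro (rfl | ⟨a, rfl⟩)
    · exact ⟨Sum.inr (), by show mtPhi φ u m (MappingTorus.stable (twisted φ u m)) = _; simp⟩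
    · exact ⟨Sum.inl a, by show mtPhi φ u m (MappingTorus.base (twisted φ u m) a) = _; simp⟩

end Part3

section Rho
variable {G : Type*} [Group G]

lemma iterateHom_succ_apply' {φ : G →* G} (n : ℕ) (x : G) :
    iterateHom φ n (φ x) = iterateHom φ (n + 1) x := by
  induction n with
  | zero => rfl
  | succ k ih =>
    show φ (iterateHom φ k (φ x)) = φ (iterateHom φ (k+1) x)
    rw [ih]

lemma sdp_conj_inl {N H : Type*} [Group N] [Group H] {A : H →* MulAut N} (g : N) (k : H)
    (n : N) :
    (⟨g, k⟩ : N ⋊[A] H) * SemidirectProduct.inl n * (⟨g, k⟩ : N ⋊[A] H)⁻¹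
      = SemidirectProduct.inl (g * A k n * g⁻¹) := by
  ext <;> simp [mul_assoc]

variable (φ : G →* G) (u : G) (m : ℕ)

def rhoBase (x : G) : ZMod m → MappingTorus (twisted φ u m) :=
  fun j => MappingTorus.base (twisted φ u m) (iterateHom φ j.val x)

def rhoT : ZMod m → MappingTorus (twisted φ u m) :=
  fun j => if j + 1 = 0 then
    MappingTorus.base (twisted φ u m) u⁻¹ * MappingTorus.stable (twisted φ u m) else 1

lemma val_add_one_of_ne {m : ℕ} [NeZero m] {j : ZMod m} (h : j + 1 ≠ 0) :
    (j + 1).val = j.val + 1 := by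
  have hm1 : 1 ≤ m := NeZero.one_le
  have hm : 1 < m := by
    rcases Nat.lt_or_ge 1 m with h' | h'
    · exact h'
    · exfalso
      apply h
      have : m = 1 := by omega
      subst this
      exact Subsingleton.elim _ _
  have hval : j.val + 1 < m := by
    by_contra hc
    apply h
    have hlt := ZMod.val_lt j
    have hj : j.val + 1 = m := by omega
    have : ((j.val + 1 : ℕ) : ZMod m) = j + 1 := by
      push_cast
      rw [ZMod.natCast_val, ZMod.cast_id]
    rw [← this, hj, ZMod.natCast_self]
  haveI : Fact (1 < m) := ⟨hm⟩
  rw [ZMod.val_add, ZMod.val_one, Nat.mod_eq_of_lt hval]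

/-- The key relation, pointwise. -/
lemma rho_rel (hm : 1 ≤ m) (x : G) (j : ZMod m) :
    rhoT φ u m j * rhoBase φ u m x (j + 1) * (rhoT φ u m j)⁻¹ = rhoBase φ u m (φ x) j := by
  haveI : NeZero m := ⟨by omega⟩
  by_cases h : j + 1 = 0
  · have hval : j.val + 1 = m := by
      have h1 : ((j.val + 1 : ℕ) : ZMod m) = 0 := by
        push_cast
        rw [ZMod.natCast_val, ZMod.cast_id]
        exact h
      have h2 : m ∣ j.val + 1 := (ZMod.natCast_eq_zero_iff _ _).mp h1
      have h3 := ZMod.val_lt j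
      exact Nat.le_antisymm (by omega) (Nat.le_of_dvd (by omega) h2)
    rw [rhoT, if_pos h, rhoBase, rhoBase, h]
    have hz : (0 : ZMod m).val = 0 := ZMod.val_zero
    rw [hz]
    show MappingTorus.base (twisted φ u m) u⁻¹ * MappingTorus.stable (twisted φ u m) *
        MappingTorus.base (twisted φ u m) (iterateHom φ 0 x) *
        (MappingTorus.base (twisted φ u m) u⁻¹ * MappingTorus.stable (twisted φ u m))⁻¹ = _
    have e1 : MappingTorus.base (twisted φ u m) u⁻¹ * MappingTorus.stable (twisted φ u m) *
        MappingTorus.base (twisted φ u m) (iterateHom φ 0 x) *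
        (MappingTorus.base (twisted φ u m) u⁻¹ * MappingTorus.stable (twisted φ u m))⁻¹
        = MappingTorus.base (twisted φ u m) u⁻¹ *
          (MappingTorus.stable (twisted φ u m) *
            MappingTorus.base (twisted φ u m) (iterateHom φ 0 x) *
            (MappingTorus.stable (twisted φ u m))⁻¹) *
          (MappingTorus.base (twisted φ u m) u⁻¹)⁻¹ := by group
    rw [e1, MappingTorus.stable_conj, ← map_inv, ← map_mul, ← map_mul]
    congr 1
    rw [inv_inv]
    show u⁻¹ * twisted φ u m (iterateHom φ 0 x) * u = iterateHom φ j.val (φ x)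
    rw [iterateHom_succ_apply', twisted_apply]
    show u⁻¹ * (u * iterateHom φ m (iterateHom φ 0 x) * u⁻¹) * u = iterateHom φ (j.val + 1) x
    rw [hval]
    have : iterateHom φ 0 x = x := rfl
    rw [this]
    group
  · rw [rhoT, if_neg h, one_mul, inv_one, mul_one, rhoBase, rhoBase,
      val_add_one_of_ne h, ← iterateHom_succ_apply']

def rho (hm : 1 ≤ m) : MappingTorus φ →*
    (ZMod m → MappingTorus (twisted φ u m)) ⋊[shiftAut (MappingTorus (twisted φ u m)) m]
      Multiplicative (ZMod m) :=
  PresentedGroup.toGroup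
    (f := Sum.elim (fun x => SemidirectProduct.inl (rhoBase φ u m x))
      (fun _ => ⟨rhoT φ u m, Multiplicative.ofAdd 1⟩))
    (by
      rintro r (⟨p, rfl⟩ | ⟨x, rfl⟩)
      · simp only [map_mul, map_inv, FreeGroup.lift_apply_of, Sum.elim_inl]
        rw [← map_mul, ← map_inv, ← map_mul]
        convert map_one (SemidirectProduct.inl
          (φ := shiftAut (MappingTorus (twisted φ u m)) m))
        rw [mul_inv_eq_one]
        funext j
        simp [rhoBase, map_mul]
      · simp only [map_mul, map_inv, FreeGroup.lift_apply_of, Sum.elim_inl, Sum.elim_inr]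
        rw [mul_inv_eq_one, sdp_conj_inl, SemidirectProduct.inl_inj]
        funext j
        show rhoT φ u m j * rhoBase φ u m x (j + Multiplicative.toAdd (Multiplicative.ofAdd (1 : ZMod m))) * (rhoT φ u m j)⁻¹ = rhoBase φ u m (φ x) j
        rw [toAdd_ofAdd]
        exact rho_rel φ u m hm x j)

end Rho

section Inj
variable {G : Type*} [Group G] (φ : G →* G) (u : G) (m : ℕ) (hm : 1 ≤ m)

@[simp] lemma rho_base (g : G) :
    rho φ u m hm (MappingTorus.base φ g) = SemidirectProduct.inl (rhoBase φ u m g) :=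
  PresentedGroup.toGroup.of _

@[simp] lemma rho_stable :
    rho φ u m hm (MappingTorus.stable φ) = ⟨rhoT φ u m, Multiplicative.ofAdd 1⟩ :=
  PresentedGroup.toGroup.of _

lemma list_prod_eq_single {M : Type*} [Monoid M] (f : ℕ → M) (k i₀ : ℕ) (h₀ : i₀ < k)
    (h : ∀ i < k, i ≠ i₀ → f i = 1) : ((List.range k).map f).prod = f i₀ := by
  induction k with
  | zero => omega
  | succ n ih =>
    rw [List.range_succ, List.map_append, List.prod_append]
    simp only [List.map_cons, List.map_nil, List.prod_cons, List.prod_nil, mul_one]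
    rcases Nat.lt_or_ge i₀ n with h1 | h1
    · rw [ih h1 (fun i hi hne => h i (by omega) hne), h n (by omega) (by omega), mul_one]
    · have hi₀ : i₀ = n := by omega
      subst hi₀
      have : ((List.range i₀).map f).prod = 1 := by
        apply List.prod_eq_one
        intro x hx
        obtain ⟨i, hi, rfl⟩ := List.mem_map.mp hx
        have hlt := List.mem_range.mp hi
        exact h i (by omega) (by omega)
      rw [this, one_mul]

lemma rho_stable_pow (k : ℕ) :
    rho φ u m hm (MappingTorus.stable φ ^ k)
      = ⟨fun j => (List.map (fun i : ℕ => rhoT φ u m (j + (i : ZMod m))) (List.range k)).prod,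
          Multiplicative.ofAdd ((k : ℕ) : ZMod m)⟩ := by
  rw [map_pow, rho_stable]
  induction k with
  | zero =>
    simp only [pow_zero, List.range_zero, List.map_nil, List.prod_nil, Nat.cast_zero]
    rfl
  | succ n ih =>
    rw [pow_succ, ih, SemidirectProduct.mul_def]
    congr 1
    · funext j
      rw [Pi.mul_apply, shiftAut_apply, toAdd_ofAdd, List.range_succ, List.map_append,
        List.prod_append]
      simp only [List.map_cons, List.map_nil, List.prod_cons, List.prod_nil, mul_one]
    · rw [← ofAdd_add]
      push_cast
      rfl

lemma prod_rhoT (hm : 1 ≤ m) (j : ZMod m) :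
    (List.map (fun i : ℕ => rhoT φ u m (j + (i : ZMod m))) (List.range m)).prod
      = MappingTorus.base (twisted φ u m) u⁻¹ * MappingTorus.stable (twisted φ u m) := by
  haveI : NeZero m := ⟨by omega⟩
  set i₀ := (-(j+1)).val with hi₀
  have hcast : ((i₀ : ℕ) : ZMod m) = -(j+1) := by
    rw [hi₀, ZMod.natCast_val, ZMod.cast_id]
  rw [list_prod_eq_single _ _ i₀ (ZMod.val_lt _)]
  · have hc : j + (i₀ : ZMod m) + 1 = 0 := by rw [hcast]; ring
    simp only [rhoT, if_pos hc]
  · intro i hi hne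
    simp only [rhoT, ite_eq_right_iff]
    intro hcontra
    exfalso
    apply hne
    have hieq : (i : ZMod m) = -(j+1) := by linear_combination hcontra
    rw [← hcast] at hieq
    have hiv : ((i : ZMod m)).val = i := ZMod.val_cast_of_lt hi
    rw [hieq] at hiv
    rw [hi₀, ← hiv, ZMod.natCast_val, ZMod.cast_id]

end Inj

section Inj2
variable {G : Type*} [Group G] (φ : G →* G) (u : G) (m : ℕ)

lemma rho_mtPhi_right (hm : 1 ≤ m) (w : MappingTorus (twisted φ u m)) :
    (rho φ u m hm (mtPhi φ u m w)).right = 1 := by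
  haveI : NeZero m := ⟨by omega⟩
  have key : (SemidirectProduct.rightHom.comp ((rho φ u m hm).comp (mtPhi φ u m))) = 1 := by
    apply PresentedGroup.ext
    rintro (g | ⟨⟩)
    · show (rho φ u m hm (mtPhi φ u m (MappingTorus.base (twisted φ u m) g))).right = 1
      rw [mtPhi_base, rho_base]
      rfl
    · show (rho φ u m hm (mtPhi φ u m (MappingTorus.stable (twisted φ u m)))).right = 1
      rw [mtPhi_stable, map_mul, rho_base, rho_stable_pow]
      show 1 * Multiplicative.ofAdd ((m : ℕ) : ZMod m) = 1
      rw [one_mul, ZMod.natCast_self]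
      rfl
  calc (rho φ u m hm (mtPhi φ u m w)).right
      = (SemidirectProduct.rightHom.comp ((rho φ u m hm).comp (mtPhi φ u m))) w := rfl
    _ = 1 := by rw [key]; rfl

/-- Left inverse of `mtPhi` on the image. -/
def nu (hm : 1 ≤ m) : MappingTorus (twisted φ u m) →* MappingTorus (twisted φ u m) :=
  MonoidHom.mk' (fun w => (rho φ u m hm (mtPhi φ u m w)).left 0)
    (by
      intro a b
      show (rho φ u m hm (mtPhi φ u m (a * b))).left 0
        = (rho φ u m hm (mtPhi φ u m a)).left 0 * (rho φ u m hm (mtPhi φ u m b)).left 0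
      rw [map_mul, map_mul, SemidirectProduct.mul_left, Pi.mul_apply,
        rho_mtPhi_right φ u m hm a, map_one]
      rfl)

lemma nu_eq_id (hm : 1 ≤ m) : nu φ u m hm = MonoidHom.id (MappingTorus (twisted φ u m)) := by
  haveI : NeZero m := ⟨by omega⟩
  apply PresentedGroup.ext
  rintro (g | ⟨⟩)
  · show (rho φ u m hm (mtPhi φ u m (MappingTorus.base (twisted φ u m) g))).left 0
      = MappingTorus.base (twisted φ u m) g
    rw [mtPhi_base, rho_base]
    show rhoBase φ u m g 0 = _
    rw [rhoBase, ZMod.val_zero]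
    rfl
  · show (rho φ u m hm (mtPhi φ u m (MappingTorus.stable (twisted φ u m)))).left 0
      = MappingTorus.stable (twisted φ u m)
    rw [mtPhi_stable, map_mul, rho_base, rho_stable_pow, SemidirectProduct.mul_left,
      SemidirectProduct.right_inl, map_one, MulAut.one_apply, SemidirectProduct.left_inl,
      Pi.mul_apply]
    show rhoBase φ u m u 0 *
      (List.map (fun i : ℕ => rhoT φ u m ((0 : ZMod m) + (i : ZMod m))) (List.range m)).prod = _
    rw [prod_rhoT φ u m hm 0]
    simp only [rhoBase, ZMod.val_zero]
    show MappingTorus.base (twisted φ u m) u *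
      (MappingTorus.base (twisted φ u m) u⁻¹ * MappingTorus.stable (twisted φ u m)) = _
    rw [map_inv]
    group

lemma mtPhi_injective (hm : 1 ≤ m) : Function.Injective (mtPhi φ u m) := by
  intro a b hab
  have ha : nu φ u m hm a = a := by rw [nu_eq_id]; rfl
  have hb : nu φ u m hm b = b := by rw [nu_eq_id]; rfl
  rw [← ha, ← hb]
  show (rho φ u m hm (mtPhi φ u m a)).left 0 = (rho φ u m hm (mtPhi φ u m b)).left 0
  rw [hab]

end Inj2


/-- For `u ∈ F` and `m ≥ 1`, the subgroup `⟨u t^m, F⟩` of `G_φ` equals `⟨t^m, F⟩`,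
has index `m`, and with `s = u t^m` is isomorphic to the mapping torus of
`ψ : x ↦ u φ^m(x) u⁻¹` via an isomorphism restricting to the identity on `F` and
sending the stable letter to `s`. -/
theorem stmt8 {α : Type*} (φ : FreeGroup α →* FreeGroup α) (hφ : Function.Injective φ)
    (u : FreeGroup α) (m : ℕ) (hm : 1 ≤ m) :
    Subgroup.closure
        (insert (MappingTorus.base φ u * MappingTorus.stable φ ^ m)
          (Set.range (MappingTorus.base φ)))
      = Subgroup.closure
          (insert (MappingTorus.stable φ ^ m) (Set.range (MappingTorus.base φ))) ∧
    (Subgroup.closure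
        (insert (MappingTorus.base φ u * MappingTorus.stable φ ^ m)
          (Set.range (MappingTorus.base φ)))).index = m ∧
    ∃ e : MappingTorus ((MulAut.conj u).toMonoidHom.comp (iterateHom φ m)) ≃*
        (Subgroup.closure
          (insert (MappingTorus.base φ u * MappingTorus.stable φ ^ m)
            (Set.range (MappingTorus.base φ)))),
      (∀ x : FreeGroup α,
        (e (MappingTorus.base ((MulAut.conj u).toMonoidHom.comp (iterateHom φ m)) x) :
            MappingTorus φ) = MappingTorus.base φ x) ∧
      (e (MappingTorus.stable ((MulAut.conj u).toMonoidHom.comp (iterateHom φ m))) :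
          MappingTorus φ)
        = MappingTorus.base φ u * MappingTorus.stable φ ^ m := by
  refine ⟨?_, MTIndex.Hgp_index hm, ?_⟩
  · apply le_antisymm
    · rw [Subgroup.closure_le]
      rintro x (rfl | hx)
      · exact Subgroup.mul_mem _
          (Subgroup.subset_closure (Set.mem_insert_of_mem _ ⟨u, rfl⟩))
          (Subgroup.subset_closure (Set.mem_insert _ _))
      · exact Subgroup.subset_closure (Set.mem_insert_of_mem _ hx)
    · rw [Subgroup.closure_le]
      rintro x (rfl | hx)
      · have h2 := Subgroup.mul_mem _
          (Subgroup.inv_mem _ (Subgroup.subset_closure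
            (Set.mem_insert_of_mem (MappingTorus.base φ u * MappingTorus.stable φ ^ m)
              (⟨u, rfl⟩ : MappingTorus.base φ u ∈ Set.range (MappingTorus.base φ)))))
          (Subgroup.subset_closure (Set.mem_insert
            (MappingTorus.base φ u * MappingTorus.stable φ ^ m)
            (Set.range (MappingTorus.base φ))))
        rwa [inv_mul_cancel_left] at h2
      · exact Subgroup.subset_closure (Set.mem_insert_of_mem _ hx)
  · refine ⟨(MonoidHom.ofInjective (mtPhi_injective φ u m hm)).trans
      (MulEquiv.subgroupCongr (mtPhi_range φ u m)), ?_, ?_⟩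
    · intro x
      show ((MulEquiv.subgroupCongr (mtPhi_range φ u m))
        (MonoidHom.ofInjective (mtPhi_injective φ u m hm)
          (MappingTorus.base (twisted φ u m) x)) : MappingTorus φ) = _
      rw [MulEquiv.subgroupCongr_apply, MonoidHom.ofInjective_apply, mtPhi_base]
    · show ((MulEquiv.subgroupCongr (mtPhi_range φ u m))
        (MonoidHom.ofInjective (mtPhi_injective φ u m hm)
          (MappingTorus.stable (twisted φ u m))) : MappingTorus φ) = _
      rw [MulEquiv.subgroupCongr_apply, MonoidHom.ofInjective_apply, mtPhi_stable]
end

section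
/- Let G_φ be the mapping torus group of an injective endomorphism φ : F → F of a free group F, with stable letter t. Let u ∈ F, m ≥ 1 an integer, s = u t^m, and let V ≤ F be a nontrivial finitely generated subgroup such that s V s⁻¹ ≤ V, and set H = ⟨s, V⟩ ≤ G_φ (so H is a sub-mapping torus subgroup). Then H is isomorphic to the mapping torus group G_ψ = ⟨V, s | s y s⁻¹ = ψ(y) for all y ∈ V⟩ of the injective endomorphism ψ : V → V defined by ψ(y) = u φ^m(y) u⁻¹, via an isomorphism that restricts to the identity on V and sends the stable letter of G_ψ to s. -/
section Aux

variable {G : Type*} [Group G] (ψ : G →* G)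

lemma MappingTorus.base_eq (g : G) :
    MappingTorus.base ψ g = PresentedGroup.mk (mappingTorusRels G ψ) (FreeGroup.of (Sum.inl g)) :=
  rfl

lemma MappingTorus.stable_eq :
    MappingTorus.stable ψ = PresentedGroup.mk (mappingTorusRels G ψ) (FreeGroup.of (Sum.inr ())) :=
  rfl

lemma MappingTorus.stable_mul_base (g : G) :
    MappingTorus.stable ψ * MappingTorus.base ψ g
      = MappingTorus.base ψ (ψ g) * MappingTorus.stable ψ := by
  have key : PresentedGroup.mk (mappingTorusRels G ψ)
      (FreeGroup.of (Sum.inr ()) * FreeGroup.of (Sum.inl g) * (FreeGroup.of (Sum.inr ()))⁻¹ *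
        (FreeGroup.of (Sum.inl (ψ g)))⁻¹) = 1 := by
    apply (QuotientGroup.eq_one_iff _).mpr
    exact Subgroup.subset_normalClosure (Or.inr ⟨g, rfl⟩)
  rw [map_mul, map_mul, map_mul, map_inv, map_inv, mul_inv_eq_one] at key
  rw [MappingTorus.base_eq, MappingTorus.base_eq, MappingTorus.stable_eq, ← key]
  group

lemma MappingTorus.stable_pow_mul_base (k : ℕ) (g : G) :
    MappingTorus.stable ψ ^ k * MappingTorus.base ψ g
      = MappingTorus.base ψ (iterateHom ψ k g) * MappingTorus.stable ψ ^ k := by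
  induction k with
  | zero => simp [iterateHom]
  | succ n ih =>
    rw [pow_succ', mul_assoc, ih, ← mul_assoc, MappingTorus.stable_mul_base ψ, mul_assoc,
      ← pow_succ']
    rfl

lemma MappingTorus.base_mul_inv_stable_pow (k : ℕ) (g : G) :
    MappingTorus.base ψ g * (MappingTorus.stable ψ)⁻¹ ^ k
      = (MappingTorus.stable ψ)⁻¹ ^ k * MappingTorus.base ψ (iterateHom ψ k g) := by
  have h := MappingTorus.stable_pow_mul_base ψ k g
  rw [inv_pow]
  have key : MappingTorus.stable ψ ^ k * (MappingTorus.base ψ g * (MappingTorus.stable ψ ^ k)⁻¹)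
      = MappingTorus.stable ψ ^ k *
        ((MappingTorus.stable ψ ^ k)⁻¹ * MappingTorus.base ψ (iterateHom ψ k g)) := by
    rw [← mul_assoc, h]
    group
  exact mul_left_cancel key

/-- The stable-letter exponent homomorphism to `Multiplicative ℤ`. -/
noncomputable def MappingTorus.exponent : MappingTorus ψ →* Multiplicative ℤ :=
  PresentedGroup.toGroup (f := Sum.elim (fun _ : G => (1 : Multiplicative ℤ))
      (fun _ => Multiplicative.ofAdd (1 : ℤ))) (by
    rintro r (⟨p, rfl⟩ | ⟨g, rfl⟩) <;> simp)

lemma MappingTorus.exponent_base (g : G) :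
    MappingTorus.exponent ψ (MappingTorus.base ψ g) = 1 := by
  exact
    PresentedGroup.toGroup.of (f := Sum.elim (fun _ : G => (1 : Multiplicative ℤ))
      (fun _ => Multiplicative.ofAdd (1 : ℤ))) (x := Sum.inl g) _

lemma MappingTorus.exponent_stable :
    MappingTorus.exponent ψ (MappingTorus.stable ψ) = Multiplicative.ofAdd (1 : ℤ) := by
  exact
    PresentedGroup.toGroup.of (f := Sum.elim (fun _ : G => (1 : Multiplicative ℤ))
      (fun _ => Multiplicative.ofAdd (1 : ℤ))) (x := Sum.inr ()) _

/-- If `ψ` is injective, the base group embeds in the mapping torus.  This is proved by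
mapping to the Mathlib `HNNExtension` with `A = ⊤` and `B = ψ.range`. -/
theorem MappingTorus.base_injective (hψ : Function.Injective ψ) :
    Function.Injective (MappingTorus.base ψ) := by
  classical
  let e : (⊤ : Subgroup G) ≃* ψ.range :=
    (Subgroup.topEquiv).trans (MonoidHom.ofInjective hψ)
  let h : MappingTorus ψ →* HNNExtension G ⊤ ψ.range e :=
    PresentedGroup.toGroup (f := Sum.elim HNNExtension.of (fun _ => HNNExtension.t)) (by
      rintro r (⟨p, rfl⟩ | ⟨g, rfl⟩)
      · simp only [map_mul, map_inv, FreeGroup.lift_apply_of, Sum.elim_inl]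
        group
      · have := HNNExtension.equiv_eq_conj (φ := e) ⟨g, trivial⟩
        have he : ((e ⟨g, trivial⟩ : ψ.range) : G) = ψ g := by
          simp [e, MonoidHom.ofInjective_apply]
        rw [he] at this
        simp only [map_mul, map_inv, FreeGroup.lift_apply_of, Sum.elim_inl, Sum.elim_inr]
        rw [← this]
        group)
  have hcomp : ∀ g : G, h (MappingTorus.base ψ g) = HNNExtension.of g := by
    intro g
    exact PresentedGroup.toGroup.of
      (f := Sum.elim HNNExtension.of (fun _ => HNNExtension.t)) (x := Sum.inl g) _
  intro a b hab
  apply HNNExtension.of_injective (φ := e)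
  rw [← hcomp, ← hcomp, hab]

/-- Every element of the mapping torus has the form `t⁻¹ᵖ · g · tᵠ`. -/
theorem MappingTorus.exists_normal_form (x : MappingTorus ψ) :
    ∃ (p q : ℕ) (g : G),
      x = (MappingTorus.stable ψ)⁻¹ ^ p * MappingTorus.base ψ g * MappingTorus.stable ψ ^ q := by
  set t := MappingTorus.stable ψ with ht
  have key : ∀ (p q p' q' : ℕ) (g g' : G),
      ∃ (p'' q'' : ℕ) (g'' : G),
        (t⁻¹ ^ p * MappingTorus.base ψ g * t ^ q) *
          (t⁻¹ ^ p' * MappingTorus.base ψ g' * t ^ q')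
        = t⁻¹ ^ p'' * MappingTorus.base ψ g'' * t ^ q'' := by
    intro p q p' q' g g'
    rcases le_or_gt p' q with hle | hlt
    · refine ⟨p, q - p' + q', g * iterateHom ψ (q - p') g', ?_⟩
      have hq : t ^ q = t ^ (q - p') * t ^ p' := by rw [← pow_add]; congr 1; omega
      have hmid : t ^ p' * t⁻¹ ^ p' = 1 := by
        rw [inv_pow, mul_inv_cancel]
      calc (t⁻¹ ^ p * MappingTorus.base ψ g * t ^ q) *
            (t⁻¹ ^ p' * MappingTorus.base ψ g' * t ^ q')
          = t⁻¹ ^ p * MappingTorus.base ψ g * (t ^ (q - p') * (t ^ p' * t⁻¹ ^ p') *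
              MappingTorus.base ψ g') * t ^ q' := by
            rw [hq]; group
        _ = t⁻¹ ^ p * MappingTorus.base ψ g * (t ^ (q - p') *
              MappingTorus.base ψ g') * t ^ q' := by rw [hmid]; group
        _ = t⁻¹ ^ p * MappingTorus.base ψ g * (MappingTorus.base ψ (iterateHom ψ (q - p') g') *
              t ^ (q - p')) * t ^ q' := by rw [MappingTorus.stable_pow_mul_base]
        _ = t⁻¹ ^ p * (MappingTorus.base ψ g * MappingTorus.base ψ (iterateHom ψ (q - p') g')) *
              (t ^ (q - p') * t ^ q') := by group
        _ = t⁻¹ ^ p * MappingTorus.base ψ (g * iterateHom ψ (q - p') g') * t ^ (q - p' + q') := by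
            rw [map_mul, pow_add]
    · refine ⟨p + (p' - q), q', iterateHom ψ (p' - q) g * g', ?_⟩
      have hp' : t⁻¹ ^ p' = t⁻¹ ^ q * t⁻¹ ^ (p' - q) := by rw [← pow_add]; congr 1; omega
      have hmid : t ^ q * t⁻¹ ^ q = 1 := by rw [inv_pow, mul_inv_cancel]
      calc (t⁻¹ ^ p * MappingTorus.base ψ g * t ^ q) *
            (t⁻¹ ^ p' * MappingTorus.base ψ g' * t ^ q')
          = t⁻¹ ^ p * (MappingTorus.base ψ g * ((t ^ q * t⁻¹ ^ q) * t⁻¹ ^ (p' - q))) *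
              (MappingTorus.base ψ g' * t ^ q') := by rw [hp']; group
        _ = t⁻¹ ^ p * (MappingTorus.base ψ g * t⁻¹ ^ (p' - q)) *
              (MappingTorus.base ψ g' * t ^ q') := by rw [hmid]; group
        _ = t⁻¹ ^ p * (t⁻¹ ^ (p' - q) * MappingTorus.base ψ (iterateHom ψ (p' - q) g)) *
              (MappingTorus.base ψ g' * t ^ q') := by
            rw [MappingTorus.base_mul_inv_stable_pow]
        _ = t⁻¹ ^ (p + (p' - q)) * (MappingTorus.base ψ (iterateHom ψ (p' - q) g) *
              MappingTorus.base ψ g') * t ^ q' := by rw [pow_add]; group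
        _ = t⁻¹ ^ (p + (p' - q)) * MappingTorus.base ψ (iterateHom ψ (p' - q) g * g') * t ^ q' := by
            rw [map_mul]
  induction x using PresentedGroup.induction_on with
  | H z =>
    induction z using FreeGroup.induction_on with
    | C1 => exact ⟨0, 0, 1, by simp⟩
    | of x =>
      rcases x with g | _
      · exact ⟨0, 0, g, by simp [MappingTorus.base_eq]⟩
      · exact ⟨0, 1, 1, by simp [MappingTorus.stable_eq, ht]⟩
    | inv_of x ih =>
      obtain ⟨p, q, g, hg⟩ := ih
      refine ⟨q, p, g⁻¹, ?_⟩
      rw [map_inv, hg]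
      rw [map_inv]
      group
    | mul x y ihx ihy =>
      obtain ⟨p, q, g, hg⟩ := ihx
      obtain ⟨p', q', g', hg'⟩ := ihy
      obtain ⟨p'', q'', g'', h''⟩ := key p q p' q' g g'
      exact ⟨p'', q'', g'', by rw [map_mul, hg, hg', h'']⟩

end Aux

/-- A sub-mapping torus subgroup `H = ⟨s, V⟩` of `G_φ`, where `s = u t^m` and
`s V s⁻¹ ≤ V`, is isomorphic to the mapping torus of the injective endomorphism
`ψ : V → V`, `ψ(y) = u φ^m(y) u⁻¹`, via an isomorphism restricting to the identity
on `V` and sending the stable letter to `s`. -/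
theorem stmt9 {α : Type*} (φ : FreeGroup α →* FreeGroup α) (hφ : Function.Injective φ)
    (u : FreeGroup α) (m : ℕ) (hm : 1 ≤ m)
    (V : Subgroup (FreeGroup α)) (hV1 : V ≠ ⊥) (hV2 : V.FG)
    (hinv : ∀ v ∈ V, u * iterateHom φ m v * u⁻¹ ∈ V)
    (ψ : V →* V) (hψ : ∀ y : V, (ψ y : FreeGroup α) = u * iterateHom φ m y * u⁻¹) :
    ∃ e : MappingTorus ψ ≃*
        (Subgroup.closure
          (insert (MappingTorus.base φ u * MappingTorus.stable φ ^ m)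
            ((V.map (MappingTorus.base φ) : Subgroup (MappingTorus φ)) :
              Set (MappingTorus φ)))),
      (∀ y : V,
        (e (MappingTorus.base ψ y) : MappingTorus φ) = MappingTorus.base φ (y : FreeGroup α)) ∧
      (e (MappingTorus.stable ψ) : MappingTorus φ)
        = MappingTorus.base φ u * MappingTorus.stable φ ^ m := by
  classical
  set s : MappingTorus φ := MappingTorus.base φ u * MappingTorus.stable φ ^ m with hs
  -- conjugation by `s` on the base group
  have conj_eq : ∀ x : FreeGroup α, s * MappingTorus.base φ x * s⁻¹
      = MappingTorus.base φ (u * iterateHom φ m x * u⁻¹) := by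
    intro x
    have h2 := MappingTorus.stable_pow_mul_base φ m x
    rw [map_mul, map_mul, map_inv]
    calc s * MappingTorus.base φ x * s⁻¹
        = MappingTorus.base φ u * (MappingTorus.stable φ ^ m * MappingTorus.base φ x) *
            ((MappingTorus.stable φ ^ m)⁻¹ * (MappingTorus.base φ u)⁻¹) := by rw [hs]; group
      _ = MappingTorus.base φ u * (MappingTorus.base φ (iterateHom φ m x) *
            MappingTorus.stable φ ^ m) *
            ((MappingTorus.stable φ ^ m)⁻¹ * (MappingTorus.base φ u)⁻¹) := by rw [h2]
      _ = MappingTorus.base φ u * MappingTorus.base φ (iterateHom φ m x) *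
            (MappingTorus.base φ u)⁻¹ := by group
  -- the homomorphism from the small mapping torus
  let f : MappingTorus ψ →* MappingTorus φ :=
    PresentedGroup.toGroup
      (f := Sum.elim (fun y : V => MappingTorus.base φ (y : FreeGroup α)) (fun _ => s)) (by
      rintro r (⟨p, rfl⟩ | ⟨y, rfl⟩)
      · simp only [map_mul, map_inv, FreeGroup.lift_apply_of, Sum.elim_inl, Subgroup.coe_mul, map_mul]
        group
      · simp only [map_mul, map_inv, FreeGroup.lift_apply_of, Sum.elim_inl, Sum.elim_inr]
        have key : s * MappingTorus.base φ (y : FreeGroup α) * s⁻¹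
            = MappingTorus.base φ ((ψ y : V) : FreeGroup α) := by
          rw [hψ y]; exact conj_eq y
        rw [← key]
        group)
  have f_base : ∀ y : V, f (MappingTorus.base ψ y) = MappingTorus.base φ (y : FreeGroup α) :=
    fun y => PresentedGroup.toGroup.of _
  have f_stable : f (MappingTorus.stable ψ) = s := PresentedGroup.toGroup.of _
  -- the words representing powers of `s`
  let w : ℕ → FreeGroup α := fun k => Nat.rec 1 (fun _ wk => u * iterateHom φ m wk) k
  have spow : ∀ k : ℕ, s ^ k = MappingTorus.base φ (w k) * MappingTorus.stable φ ^ (m * k) := by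
    intro k
    induction k with
    | zero => simp [w]
    | succ n ih =>
      have hw : w (n + 1) = u * iterateHom φ m (w n) := rfl
      have harith : m + m * n = m * (n + 1) := by ring
      calc s ^ (n + 1) = s * s ^ n := by rw [pow_succ']
        _ = (MappingTorus.base φ u * MappingTorus.stable φ ^ m) *
              (MappingTorus.base φ (w n) * MappingTorus.stable φ ^ (m * n)) := by rw [ih, hs]
        _ = MappingTorus.base φ u * (MappingTorus.stable φ ^ m * MappingTorus.base φ (w n)) *
              MappingTorus.stable φ ^ (m * n) := by group
        _ = MappingTorus.base φ u * (MappingTorus.base φ (iterateHom φ m (w n)) *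
              MappingTorus.stable φ ^ m) * MappingTorus.stable φ ^ (m * n) := by
            rw [MappingTorus.stable_pow_mul_base]
        _ = MappingTorus.base φ (u * iterateHom φ m (w n)) *
              MappingTorus.stable φ ^ (m + m * n) := by rw [map_mul, pow_add]; group
        _ = MappingTorus.base φ (w (n + 1)) * MappingTorus.stable φ ^ (m * (n + 1)) := by
            rw [hw, harith]
  -- injectivity
  have hbaseinj : Function.Injective (MappingTorus.base φ) := MappingTorus.base_injective φ hφ
  have finj : Function.Injective f := by
    rw [injective_iff_map_eq_one]
    intro x hx
    obtain ⟨p, q, y, rfl⟩ := MappingTorus.exists_normal_form ψ x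
    have hfx : s⁻¹ ^ p * MappingTorus.base φ (y : FreeGroup α) * s ^ q = 1 := by
      rw [← f_base y, ← f_stable]
      simpa [map_mul, map_inv, map_pow] using hx
    rw [inv_pow, mul_assoc, inv_mul_eq_one] at hfx
    -- hfx : s ^ p = base y * s ^ q
    rw [spow p, spow q] at hfx
    have hexp := congrArg (MappingTorus.exponent φ) hfx
    simp only [map_mul, map_pow, MappingTorus.exponent_base, MappingTorus.exponent_stable,
      one_mul, mul_one] at hexp
    have hmpq : m * p = m * q := by
      have := congrArg Multiplicative.toAdd hexp
      simpa using this
    have hpq : p = q := by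
      have hm0 : m ≠ 0 := by omega
      exact Nat.eq_of_mul_eq_mul_left (by omega) hmpq
    subst hpq
    have hy : MappingTorus.base φ (y : FreeGroup α) = 1 := right_eq_mul.mp hfx
    have hy1 : (y : FreeGroup α) = 1 := hbaseinj (by simpa using hy)
    have hy2 : y = 1 := by
      ext
      simpa using hy1
    rw [hy2, map_one, mul_one, inv_pow, inv_mul_cancel]
  -- the range is the sub-mapping torus subgroup
  have hfH : ∀ x : MappingTorus ψ, f x ∈ Subgroup.closure
      (insert s ((V.map (MappingTorus.base φ) : Subgroup (MappingTorus φ)) :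
        Set (MappingTorus φ))) := by
    intro x
    refine PresentedGroup.generated_by _ ((Subgroup.closure _).comap f) ?_ x
    rintro (y | ⟨⟩)
    · have hb : f (PresentedGroup.of (Sum.inl y)) = MappingTorus.base φ (y : FreeGroup α) :=
        f_base y
      rw [Subgroup.mem_comap, hb]
      exact Subgroup.subset_closure (Set.mem_insert_iff.mpr
        (Or.inr ⟨(y : FreeGroup α), y.2, rfl⟩))
    · have hb : f (PresentedGroup.of (Sum.inr ())) = s := f_stable
      rw [Subgroup.mem_comap, hb]
      exact Subgroup.subset_closure (Set.mem_insert _ _)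
  have hHle : Subgroup.closure
      (insert s ((V.map (MappingTorus.base φ) : Subgroup (MappingTorus φ)) :
        Set (MappingTorus φ))) ≤ f.range := by
    rw [Subgroup.closure_le]
    intro x hx
    rcases Set.mem_insert_iff.mp hx with rfl | hx
    · exact ⟨MappingTorus.stable ψ, f_stable⟩
    · obtain ⟨v, hv, rfl⟩ := hx
      exact ⟨MappingTorus.base ψ ⟨v, hv⟩, f_base _⟩
  let f' : MappingTorus ψ →* Subgroup.closure
      (insert s ((V.map (MappingTorus.base φ) : Subgroup (MappingTorus φ)) :
        Set (MappingTorus φ))) := f.codRestrict _ hfH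
  have hbij : Function.Bijective f' := by
    constructor
    · intro a b hab
      exact finj (congrArg Subtype.val hab)
    · rintro ⟨x, hx⟩
      obtain ⟨a, ha⟩ := hHle hx
      exact ⟨a, Subtype.ext ha⟩
  refine ⟨MulEquiv.ofBijective f' hbij, fun y => ?_, ?_⟩
  · exact f_base y
  · exact f_stable
end

section
/- Let G_φ be the mapping torus group of an automorphism φ of a free group F, with stable letter t. Let u ∈ F, m ≥ 1 an integer, s = u t^m, and let V ≤ F be a nontrivial finitely generated subgroup with s V s⁻¹ ≤ V, and set H = ⟨s, V⟩. Then in fact s V s⁻¹ = V, the map ψ : V → V defined by ψ(y) = u φ^m(y) u⁻¹ is an automorphism of V, and H is isomorphic to the semidirect product V ⋊_ψ ℤ (with the generator of ℤ corresponding to s). -/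
universe u

open Subgroup

/-- Extend a partial map (restriction of a permutation of `X`) on a finite subset to a
permutation of that subset. -/
lemma exists_perm_extend {X : Type*} (e : Equiv.Perm X) {D : Set X} (hD : D.Finite) :
    ∃ τ : Equiv.Perm D, ∀ (d : D), e ↑d ∈ D → (τ d : X) = e ↑d := by
  classical
  have : Fintype D := hD.fintype
  set p : D → Prop := fun d => e ↑d ∈ D with hp
  set q : D → Prop := fun d => ∃ c : D, p c ∧ e ↑c = ↑d with hq
  have hf : ∀ d : {d : D // p d}, q ⟨e ↑d.1, d.2⟩ := fun d => ⟨d.1, d.2, rfl⟩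
  let f : {d : D // p d} → {d : D // q d} := fun d => ⟨⟨e ↑d.1, d.2⟩, hf d⟩
  have hinj : Function.Injective f := by
    intro a b hab
    have : (e ↑a.1.1 : X) = e ↑b.1.1 := by
      simpa [f, Subtype.ext_iff] using hab
    exact Subtype.ext (Subtype.ext (e.injective this))
  have hsurj : Function.Surjective f := by
    rintro ⟨d, c, hc, hcd⟩
    exact ⟨⟨c, hc⟩, Subtype.ext (Subtype.ext hcd)⟩
  let E := Equiv.ofBijective f ⟨hinj, hsurj⟩
  refine ⟨E.extendSubtype, ?_⟩
  intro d hd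
  rw [Equiv.extendSubtype_apply_of_mem E d hd]
  rfl

/-- M. Hall separability: a finitely generated subgroup of a free group is separable. -/
lemma sep_exists {α : Type u} (V : Subgroup (FreeGroup α)) (hV : V.FG) {x : FreeGroup α}
    (hx : x ∉ V) :
    ∃ (Q : Type u) (_ : Group Q) (_ : Finite Q) (ρ : FreeGroup α →* Q),
      ρ x ∉ V.map ρ := by
  classical
  obtain ⟨S, hS⟩ := hV
  set gens : Finset (FreeGroup α) := insert x S with hgens
  set P : Set (FreeGroup α) :=
    {w | ∃ y ∈ gens, ∃ t, t <:+ y.toWord ∧ w = FreeGroup.mk t} ∪ {1} with hP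
  have hPfin : P.Finite := by
    apply Set.Finite.union _ (Set.finite_singleton 1)
    have : {w | ∃ y ∈ gens, ∃ t, t <:+ y.toWord ∧ w = FreeGroup.mk t} ⊆
        ⋃ y ∈ (gens : Set (FreeGroup α)), (fun t => FreeGroup.mk t) '' {t | t <:+ y.toWord} := by
      rintro w ⟨y, hy, t, ht, rfl⟩
      exact Set.mem_biUnion hy ⟨t, ht, rfl⟩
    refine Set.Finite.subset ?_ this
    apply Set.Finite.biUnion (Finset.finite_toSet gens)
    intro y _
    apply Set.Finite.image
    exact (y.toWord.tails).finite_toSet.subset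
      (by intro t ht; simpa [List.mem_tails] using ht)
  set cos : FreeGroup α → FreeGroup α ⧸ V := QuotientGroup.mk with hcos
  set D : Set (FreeGroup α ⧸ V) := cos '' P with hD
  have hDfin : D.Finite := hPfin.image _
  have h1P : (1 : FreeGroup α) ∈ P := Or.inr rfl
  have h1D : cos 1 ∈ D := ⟨1, h1P, rfl⟩
  have := hDfin.to_subtype
  choose σ hσ using fun a : α =>
    exists_perm_extend (MulAction.toPerm (FreeGroup.of a) : Equiv.Perm (FreeGroup α ⧸ V)) hDfin
  set ρ : FreeGroup α →* Equiv.Perm D := FreeGroup.lift σ with hρdef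
  have hρof : ∀ a : α, ρ (FreeGroup.of a) = σ a := fun a => FreeGroup.lift_apply_of
  -- one-step lemmas
  have smul_eq : ∀ (g w : FreeGroup α), (MulAction.toPerm g : Equiv.Perm (FreeGroup α ⧸ V)) (cos w)
      = cos (g * w) := by
    intro g w
    simp [hcos, MulAction.toPerm_apply, MulAction.Quotient.smul_mk]
  have step_pos : ∀ (a : α) (w : FreeGroup α) (h1 : cos w ∈ D)
      (h2 : cos (FreeGroup.of a * w) ∈ D),
      σ a ⟨cos w, h1⟩ = ⟨cos (FreeGroup.of a * w), h2⟩ := by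
    intro a w h1 h2
    have := hσ a ⟨cos w, h1⟩ (by rw [smul_eq]; exact h2)
    apply Subtype.ext
    rw [this, smul_eq]
  have step_neg : ∀ (a : α) (w : FreeGroup α) (h1 : cos w ∈ D)
      (h2 : cos ((FreeGroup.of a)⁻¹ * w) ∈ D),
      (σ a)⁻¹ ⟨cos w, h1⟩ = ⟨cos ((FreeGroup.of a)⁻¹ * w), h2⟩ := by
    intro a w h1 h2
    have key : σ a ⟨cos ((FreeGroup.of a)⁻¹ * w), h2⟩ = ⟨cos w, h1⟩ := by
      have h3 : cos (FreeGroup.of a * ((FreeGroup.of a)⁻¹ * w)) ∈ D := by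
        rw [mul_inv_cancel_left]; exact h1
      rw [step_pos a _ h2 h3]
      apply Subtype.ext
      simp
    rw [← key]
    exact (σ a).symm_apply_apply _
  -- traversal
  have trav : ∀ (l : List (α × Bool)) (q : FreeGroup α),
      (∀ t, t <:+ l → cos (FreeGroup.mk t * q) ∈ D) →
      ∀ (h1 : cos q ∈ D) (h2 : cos (FreeGroup.mk l * q) ∈ D),
      ρ (FreeGroup.mk l) ⟨cos q, h1⟩ = ⟨cos (FreeGroup.mk l * q), h2⟩ := by
    intro l
    induction l with
    | nil =>
      intro q hts h1 h2
      apply Subtype.ext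
      show ((ρ (FreeGroup.mk [])) ⟨cos q, h1⟩ : FreeGroup α ⧸ V) = cos (FreeGroup.mk [] * q)
      have h0 : FreeGroup.mk ([] : List (α × Bool)) = 1 := rfl
      rw [h0, map_one, one_mul]
      rfl
    | cons hd tl ih =>
      intro q hts h1 h2
      have h3 : cos (FreeGroup.mk tl * q) ∈ D := hts tl (List.suffix_cons hd tl)
      have hsplit : FreeGroup.mk (hd :: tl) = FreeGroup.mk [hd] * FreeGroup.mk tl := by
        rw [FreeGroup.mul_mk]
        rfl
      have ih' := ih q (fun t ht => hts t (ht.trans (List.suffix_cons hd tl))) h1 h3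
      apply Subtype.ext
      show ((ρ (FreeGroup.mk (hd :: tl))) ⟨cos q, h1⟩ : FreeGroup α ⧸ V)
          = cos (FreeGroup.mk (hd :: tl) * q)
      rw [hsplit, map_mul, Equiv.Perm.mul_apply, ih']
      rcases hd with ⟨a, b⟩
      have h2' : cos (FreeGroup.mk [(a,b)] * (FreeGroup.mk tl * q)) ∈ D := by
        rw [← mul_assoc, FreeGroup.mul_mk]
        exact h2
      cases b
      · have hneg : FreeGroup.mk [(a, false)] = (FreeGroup.of a)⁻¹ := by
          rw [FreeGroup.of, FreeGroup.inv_mk]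
          rfl
        have hstep := step_neg a (FreeGroup.mk tl * q) h3 (by rw [← hneg]; exact h2')
        rw [hneg, map_inv, hρof, hstep]
        show cos ((FreeGroup.of a)⁻¹ * (FreeGroup.mk tl * q)) = _
        rw [← hneg, ← mul_assoc, FreeGroup.mul_mk]
      · have hpos : FreeGroup.mk [(a, true)] = FreeGroup.of a := rfl
        have hstep := step_pos a (FreeGroup.mk tl * q) h3 (by rw [← hpos]; exact h2')
        rw [hpos, hρof, hstep]
        show cos (FreeGroup.of a * (FreeGroup.mk tl * q)) = _
        rw [← hpos, ← mul_assoc, FreeGroup.mul_mk]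
  -- evaluation on generators
  have evalgen : ∀ y ∈ gens, ∀ (h2 : cos y ∈ D), ρ y ⟨cos 1, h1D⟩ = ⟨cos y, h2⟩ := by
    intro y hy h2
    have hts : ∀ t, t <:+ y.toWord → cos (FreeGroup.mk t * 1) ∈ D := by
      intro t ht
      rw [mul_one]
      exact ⟨FreeGroup.mk t, Or.inl ⟨y, hy, t, ht, rfl⟩, rfl⟩
    have h2' : cos (FreeGroup.mk y.toWord * 1) ∈ D := by
      rw [mul_one, FreeGroup.mk_toWord]; exact h2
    have hcoe : ((ρ (FreeGroup.mk y.toWord)) ⟨cos 1, h1D⟩ : FreeGroup α ⧸ V)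
        = cos (FreeGroup.mk y.toWord * 1) :=
      congrArg Subtype.val (trav y.toWord 1 hts h1D h2')
    rw [FreeGroup.mk_toWord, mul_one] at hcoe
    exact Subtype.ext hcoe
  have hyD : ∀ y ∈ gens, cos y ∈ D := by
    intro y hy
    exact ⟨y, Or.inl ⟨y, hy, y.toWord, List.suffix_refl _, (FreeGroup.mk_toWord).symm⟩, rfl⟩
  -- V fixes the basepoint
  set pt : D := ⟨cos 1, h1D⟩ with hpt
  have hfix : ∀ v ∈ V, ρ v pt = pt := by
    have hle : Subgroup.closure (S : Set (FreeGroup α))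
        ≤ (MulAction.stabilizer (Equiv.Perm D) pt).comap ρ := by
      rw [closure_le]
      intro s hs
      have hsV : s ∈ V := hS ▸ subset_closure hs
      have hsgens : s ∈ gens := Finset.mem_insert_of_mem hs
      have : ρ s pt = ⟨cos s, hyD s hsgens⟩ := evalgen s hsgens (hyD s hsgens)
      have hcoseq : cos s = cos 1 := by
        rw [hcos]
        exact (QuotientGroup.eq).mpr (by simpa using V.inv_mem hsV)
      simp only [SetLike.mem_coe, Subgroup.mem_comap, MulAction.mem_stabilizer_iff]
      show ρ s • pt = pt
      rw [Equiv.Perm.smul_def, this, hpt]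
      exact Subtype.ext hcoseq
    intro v hv
    have hv' : v ∈ Subgroup.closure (S : Set (FreeGroup α)) := hS.symm ▸ hv
    have := hle hv'
    simpa [MulAction.mem_stabilizer_iff, Equiv.Perm.smul_def] using this
  -- x moves the basepoint
  have hxmove : ρ x pt ≠ pt := by
    have hxgens : x ∈ gens := Finset.mem_insert_self x S
    rw [evalgen x hxgens (hyD x hxgens)]
    intro hcon
    apply hx
    have : cos x = cos 1 := by
      simpa [Subtype.ext_iff, hpt] using hcon
    have := (QuotientGroup.eq).mp this.symm
    simpa using this
  refine ⟨Equiv.Perm D, inferInstance, inferInstance, ρ, ?_⟩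
  rintro ⟨v, hv, hvx⟩
  exact hxmove (by rw [← hvx]; exact hfix v hv)

/-- Key lemma: if `θ` is an automorphism of a free group and `V` a finitely generated
subgroup with `θ V ≤ V`, then also `θ⁻¹ V ≤ V`. -/
lemma symm_mem_of_fg {α : Type u} (θ : MulAut (FreeGroup α)) (V : Subgroup (FreeGroup α))
    (hfg : V.FG) (hsub : ∀ v ∈ V, θ v ∈ V) : ∀ g ∈ V, θ.symm g ∈ V := by
  classical
  intro g hg
  by_contra hx
  set x : FreeGroup α := θ.symm g with hxdef
  have hθx : θ x = g := θ.apply_symm_apply g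
  obtain ⟨S, hS⟩ := hfg
  -- the enlarged subgroup
  set V' : Subgroup (FreeGroup α) := Subgroup.closure (insert x (S : Set (FreeGroup α)))
    with hV'
  have hVV' : V ≤ V' := by
    rw [← hS]
    exact Subgroup.closure_mono (Set.subset_insert _ _)
  have hxV' : x ∈ V' := Subgroup.subset_closure (Set.mem_insert _ _)
  -- forward invariance of V'
  have hsub' : ∀ v ∈ V', θ v ∈ V' := by
    intro v hv
    have hmap : V'.map θ.toMonoidHom ≤ V' := by
      rw [hV', MonoidHom.map_closure]
      apply Subgroup.closure_le _ |>.mpr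
      rintro w ⟨z, hz, rfl⟩
      rcases Set.mem_insert_iff.mp hz with rfl | hzS
      · exact hVV' (show θ x ∈ V by rw [hθx]; exact hg)
      · refine hVV' (hsub z ?_)
        exact hS ▸ Subgroup.subset_closure hzS
    exact hmap ⟨v, hv, rfl⟩
  -- iterates
  have hiter' : ∀ (n : ℕ), ∀ v ∈ V', (θ ^ n) v ∈ V' := by
    intro n
    induction n with
    | zero => intro v hv; simpa using hv
    | succ n ih =>
      intro v hv
      have hps : (θ ^ (n + 1)) v = θ ((θ ^ n) v) := by
        rw [pow_succ', MulAut.mul_apply]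
      rw [hps]
      exact hsub' _ (ih v hv)
  have hiterV : ∀ (n : ℕ), ∀ v ∈ V, (θ ^ n) v ∈ V := by
    intro n
    induction n with
    | zero => intro v hv; simpa using hv
    | succ n ih =>
      intro v hv
      have hps : (θ ^ (n + 1)) v = θ ((θ ^ n) v) := by
        rw [pow_succ', MulAut.mul_apply]
      rw [hps]
      exact hsub _ (ih v hv)
  -- separability
  obtain ⟨Q, _, _, ρ, hρ⟩ := sep_exists V ⟨S, hS⟩ hx
  -- pigeonhole on restrictions of ρ ∘ θ⁻ᵏ to the generators of V'
  set gens' : Set (FreeGroup α) := insert x (S : Set (FreeGroup α)) with hgens'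
  have hgfin : gens'.Finite := S.finite_toSet.insert x
  have := hgfin.to_subtype
  set f : ℕ → (gens' → Q) := fun k s => ρ ((θ.symm ^ k) ↑s) with hf
  have key : ∀ i j : ℕ, i < j → f i = f j → False := by
    intro i j hlt hfeq
    -- homomorphism equality on V'
    set A : FreeGroup α →* Q := ρ.comp ((θ.symm ^ i) : MulAut (FreeGroup α)).toMonoidHom
      with hA
    set B : FreeGroup α →* Q := ρ.comp ((θ.symm ^ j) : MulAut (FreeGroup α)).toMonoidHom
      with hB
    have hVle : V' ≤ A.eqLocus B := by
      rw [hV', Subgroup.closure_le]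
      intro s hs
      have := congrFun hfeq ⟨s, hs⟩
      show A s = B s
      simpa [hf, hA, hB] using this
    -- evaluate at θ^j x
    have hjx : (θ ^ j) x ∈ V' := hiter' j x hxV'
    have hEq := hVle hjx
    have hAx : A ((θ ^ j) x) = ρ ((θ ^ (j - i)) x) := by
      simp only [hA, MonoidHom.comp_apply, MulEquiv.coe_toMonoidHom]
      congr 1
      have : (θ.symm ^ i) ((θ ^ j) x) = ((θ.symm ^ i) * (θ ^ j)) x := rfl
      rw [this]
      congr 1
      have h1 : (θ.symm ^ i : MulAut (FreeGroup α)) = (θ ^ i)⁻¹ := by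
        rw [← inv_pow]
        rfl
      rw [h1]
      have h2 : (θ : MulAut (FreeGroup α)) ^ j = θ ^ i * θ ^ (j - i) := by
        rw [← pow_add]
        congr 1
        omega
      rw [h2, ← mul_assoc, inv_mul_cancel, one_mul]
    have hBx : B ((θ ^ j) x) = ρ x := by
      simp only [hB, MonoidHom.comp_apply, MulEquiv.coe_toMonoidHom]
      congr 1
      have : (θ.symm ^ j) ((θ ^ j) x) = ((θ.symm ^ j) * (θ ^ j)) x := rfl
      rw [this]
      have h1 : (θ.symm ^ j : MulAut (FreeGroup α)) = (θ ^ j)⁻¹ := by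
        rw [← inv_pow]
        rfl
      rw [h1, inv_mul_cancel]
      rfl
    -- θ^(j-i) x ∈ V
    have hmem : (θ ^ (j - i)) x ∈ V := by
      have hji : j - i = (j - i - 1) + 1 := by omega
      have : (θ ^ ((j - i - 1) + 1)) x = (θ ^ (j - i - 1)) (θ x) := by
        rw [pow_succ, MulAut.mul_apply]
      rw [hji, this, hθx]
      exact hiterV _ g hg
    -- contradiction
    apply hρ
    refine ⟨(θ ^ (j - i)) x, hmem, ?_⟩
    rw [← hAx, hEq, hBx]
  obtain ⟨i, j, hij, hfeq⟩ := Finite.exists_ne_map_eq_of_infinite f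
  rcases hij.lt_or_gt with hlt | hlt
  · exact key i j hlt hfeq
  · exact key j i hlt hfeq.symm

section MTLemmas

variable {α : Type u} (φ : FreeGroup α ≃* FreeGroup α)

private lemma iter_apply_succ (n : ℕ) (x : FreeGroup α) :
    iterateHom φ.toMonoidHom (n + 1) x = φ (iterateHom φ.toMonoidHom n x) := rfl

private lemma iterate_eq_pow (m : ℕ) (x : FreeGroup α) :
    iterateHom φ.toMonoidHom m x = ((φ : MulAut (FreeGroup α)) ^ m) x := by
  induction m with
  | zero => rfl
  | succ n ih =>
    have h2 : (((φ : MulAut (FreeGroup α))) ^ (n + 1)) x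
        = (φ : MulAut (FreeGroup α)) (((φ : MulAut (FreeGroup α)) ^ n) x) := by
      rw [pow_succ', MulAut.mul_apply]
    rw [iter_apply_succ, h2, ih]

private lemma iter_comm (n : ℕ) (g : FreeGroup α) :
    iterateHom φ.toMonoidHom n (φ.toMonoidHom g)
      = φ.toMonoidHom (iterateHom φ.toMonoidHom n g) := by
  induction n with
  | zero => rfl
  | succ n ih =>
    have h1 : iterateHom φ.toMonoidHom (n + 1) (φ.toMonoidHom g)
        = φ (iterateHom φ.toMonoidHom n (φ.toMonoidHom g)) := rfl
    rw [h1, ih]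
    rfl

private lemma mt_rel (g : FreeGroup α) :
    MappingTorus.stable φ.toMonoidHom * MappingTorus.base φ.toMonoidHom g *
      (MappingTorus.stable φ.toMonoidHom)⁻¹
      = MappingTorus.base φ.toMonoidHom (φ.toMonoidHom g) := by
  have key : PresentedGroup.mk (mappingTorusRels (FreeGroup α) φ.toMonoidHom)
      (FreeGroup.of (Sum.inr ()) * FreeGroup.of (Sum.inl g) * (FreeGroup.of (Sum.inr ()))⁻¹ *
        (FreeGroup.of (Sum.inl (φ.toMonoidHom g)))⁻¹) = 1 := by
    apply (QuotientGroup.eq_one_iff _).mpr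
    exact Subgroup.subset_normalClosure (Or.inr ⟨g, rfl⟩)
  rw [map_mul, map_mul, map_mul, map_inv, map_inv, mul_inv_eq_one] at key
  exact key

private lemma mt_rel' (g : FreeGroup α) :
    MappingTorus.stable φ.toMonoidHom * MappingTorus.base φ.toMonoidHom g
      = MappingTorus.base φ.toMonoidHom (φ.toMonoidHom g) * MappingTorus.stable φ.toMonoidHom := by
  rw [← mt_rel φ g, inv_mul_cancel_right]

private lemma mt_pow (k : ℕ) (g : FreeGroup α) :
    MappingTorus.stable φ.toMonoidHom ^ k * MappingTorus.base φ.toMonoidHom g =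
      MappingTorus.base φ.toMonoidHom (iterateHom φ.toMonoidHom k g) *
        MappingTorus.stable φ.toMonoidHom ^ k := by
  induction k with
  | zero =>
    have : iterateHom φ.toMonoidHom 0 g = g := rfl
    rw [this, pow_zero, one_mul, mul_one]
  | succ n ih =>
    rw [pow_succ', mul_assoc, ih, ← mul_assoc, mt_rel' φ, mul_assoc, ← pow_succ',
      iter_apply_succ φ n g]
    rfl

private lemma s_conj (u : FreeGroup α) (m : ℕ) (v : FreeGroup α) :
    (MappingTorus.base φ.toMonoidHom u * MappingTorus.stable φ.toMonoidHom ^ m) *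
      MappingTorus.base φ.toMonoidHom v *
      (MappingTorus.base φ.toMonoidHom u * MappingTorus.stable φ.toMonoidHom ^ m)⁻¹
      = MappingTorus.base φ.toMonoidHom (u * iterateHom φ.toMonoidHom m v * u⁻¹) := by
  set b := MappingTorus.base φ.toMonoidHom
  set t := MappingTorus.stable φ.toMonoidHom
  have h0 : (b u * t ^ m) * b v * (b u * t ^ m)⁻¹
      = b u * ((t ^ m * b v) * (t ^ m)⁻¹) * (b u)⁻¹ := by
    group
  rw [h0, mt_pow φ m v, mul_assoc (b (iterateHom φ.toMonoidHom m v)), mul_inv_cancel, mul_one,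
    ← map_inv b, ← map_mul b, ← map_mul b]

private def mtZ : MappingTorus φ.toMonoidHom →* Multiplicative ℤ :=
  PresentedGroup.toGroup (f := Sum.elim (fun _ : FreeGroup α => (1 : Multiplicative ℤ))
    (fun _ => Multiplicative.ofAdd 1)) (by
      rintro r (⟨⟨g, h⟩, rfl⟩ | ⟨g, rfl⟩) <;>
        simp [mul_comm])

private lemma mtZ_base (g : FreeGroup α) :
    mtZ φ (MappingTorus.base φ.toMonoidHom g) = 1 :=
  PresentedGroup.toGroup.of _

private lemma mtZ_stable :
    mtZ φ (MappingTorus.stable φ.toMonoidHom) = Multiplicative.ofAdd 1 :=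
  PresentedGroup.toGroup.of _

private def mtSplit : MappingTorus φ.toMonoidHom →*
    SemidirectProduct (FreeGroup α) (Multiplicative ℤ)
      (zpowersHom (MulAut (FreeGroup α)) (φ : MulAut (FreeGroup α))) :=
  PresentedGroup.toGroup (f := Sum.elim (fun g => SemidirectProduct.inl g)
    (fun _ => SemidirectProduct.inr (Multiplicative.ofAdd 1))) (by
      rintro r (⟨⟨g, h⟩, rfl⟩ | ⟨g, rfl⟩)
      · simp [mul_assoc]
      · simp only [map_mul, map_inv, FreeGroup.lift_apply_of, Sum.elim_inl, Sum.elim_inr,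
          mul_inv_eq_one]
        rw [← map_inv, ← SemidirectProduct.inl_aut]
        congr 1)

private lemma mtSplit_base (g : FreeGroup α) :
    mtSplit φ (MappingTorus.base φ.toMonoidHom g) = SemidirectProduct.inl g :=
  PresentedGroup.toGroup.of _

private lemma base_inj : Function.Injective (MappingTorus.base φ.toMonoidHom) := by
  intro a b hab
  have h := congrArg (mtSplit φ) hab
  rw [mtSplit_base, mtSplit_base] at h
  exact SemidirectProduct.inl_injective h

end MTLemmas

/-- If `φ` is an automorphism, a sub-mapping torus subgroup `H = ⟨s, V⟩` with
`s V s⁻¹ ≤ V` in fact satisfies `s V s⁻¹ = V`, the map `ψ : y ↦ u φ^m(y) u⁻¹` is an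
automorphism of `V`, and `H` is isomorphic to the semidirect product `V ⋊_ψ ℤ` with
the generator of `ℤ` corresponding to `s`. -/
theorem stmt10 {α : Type*} (φ : FreeGroup α ≃* FreeGroup α)
    (u : FreeGroup α) (m : ℕ) (hm : 1 ≤ m)
    (V : Subgroup (FreeGroup α)) (hV1 : V ≠ ⊥) (hV2 : V.FG)
    (hinv : ∀ v ∈ V, u * iterateHom φ.toMonoidHom m v * u⁻¹ ∈ V) :
    V.map ((MulAut.conj u).toMonoidHom.comp (iterateHom φ.toMonoidHom m)) = V ∧
    ∃ ψ : V ≃* V,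
      (∀ y : V, (ψ y : FreeGroup α) = u * iterateHom φ.toMonoidHom m y * u⁻¹) ∧
      ∃ e : (V ⋊[zpowersHom (MulAut V) ψ] Multiplicative ℤ) ≃*
          (Subgroup.closure
            (insert (MappingTorus.base φ.toMonoidHom u *
                MappingTorus.stable φ.toMonoidHom ^ m)
              ((V.map (MappingTorus.base φ.toMonoidHom) :
                  Subgroup (MappingTorus φ.toMonoidHom)) :
                Set (MappingTorus φ.toMonoidHom)))),
        (∀ y : V,
          (e (SemidirectProduct.inl y) : MappingTorus φ.toMonoidHom)
            = MappingTorus.base φ.toMonoidHom (y : FreeGroup α)) ∧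
        (e (SemidirectProduct.inr (Multiplicative.ofAdd 1)) : MappingTorus φ.toMonoidHom)
          = MappingTorus.base φ.toMonoidHom u * MappingTorus.stable φ.toMonoidHom ^ m := by
  classical
  set b := MappingTorus.base φ.toMonoidHom with hb
  set t := MappingTorus.stable φ.toMonoidHom with ht
  set s := b u * t ^ m with hs
  set Θ : MulAut (FreeGroup α) := MulAut.conj u * ((φ : MulAut (FreeGroup α)) ^ m) with hΘdef
  have hΘ : ∀ v : FreeGroup α, Θ v = u * iterateHom φ.toMonoidHom m v * u⁻¹ := by
    intro v
    rw [hΘdef, MulAut.mul_apply, MulAut.conj_apply, iterate_eq_pow]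
  have hfwd : ∀ v ∈ V, Θ v ∈ V := by
    intro v hv
    rw [hΘ]
    exact hinv v hv
  have hbwd : ∀ g ∈ V, Θ.symm g ∈ V := symm_mem_of_fg Θ V hV2 hfwd
  constructor
  · -- the subgroup map equality
    have hhom : (MulAut.conj u).toMonoidHom.comp (iterateHom φ.toMonoidHom m)
        = Θ.toMonoidHom := by
      ext v
      show MulAut.conj u (iterateHom φ.toMonoidHom m (FreeGroup.of v)) = Θ (FreeGroup.of v)
      rw [hΘ (FreeGroup.of v), MulAut.conj_apply]
    rw [hhom]
    apply le_antisymm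
    · rintro g ⟨v, hv, rfl⟩
      exact hfwd v hv
    · intro g hg
      exact ⟨Θ.symm g, hbwd g hg, Θ.apply_symm_apply g⟩
  · -- the automorphism ψ of V
    set ψ : V ≃* V :=
      { toFun := fun v => ⟨Θ ↑v, hfwd ↑v v.2⟩
        invFun := fun v => ⟨Θ.symm ↑v, hbwd ↑v v.2⟩
        left_inv := fun v => Subtype.ext (Θ.symm_apply_apply ↑v)
        right_inv := fun v => Subtype.ext (Θ.apply_symm_apply ↑v)
        map_mul' := fun a b => Subtype.ext (map_mul Θ ↑a ↑b) } with hψdef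
    have hψcoe : ∀ y : V, ((ψ y : V) : FreeGroup α)
        = u * iterateHom φ.toMonoidHom m ↑y * u⁻¹ := fun y => hΘ ↑y
    refine ⟨ψ, hψcoe, ?_⟩
    -- conjugation relations in the mapping torus
    have c1 : ∀ v : V, b ↑(ψ v) = s * b ↑v * s⁻¹ := by
      intro v
      have : ((ψ v : V) : FreeGroup α) = u * iterateHom φ.toMonoidHom m ↑v * u⁻¹ := hψcoe v
      rw [this, hs]
      exact (s_conj φ u m ↑v).symm
    have c1' : ∀ v : V, b ↑(ψ⁻¹ v) = s⁻¹ * b ↑v * s := by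
      intro v
      have h := c1 (ψ⁻¹ v)
      rw [MulAut.apply_inv_self] at h
      rw [h]
      group
    have czv : ∀ z : ℤ, ∀ v : V, b ↑((ψ ^ z) v) = s ^ z * b ↑v * (s ^ z)⁻¹ := by
      intro z
      induction z using Int.induction_on with
      | zero =>
        intro v
        show b ↑((ψ ^ (0:ℤ)) v) = s ^ (0:ℤ) * b ↑v * (s ^ (0:ℤ))⁻¹
        rw [zpow_zero, zpow_zero, inv_one, one_mul, mul_one]
        rfl
      | succ n ih =>
        intro v
        have hsplit : (ψ ^ ((n : ℤ) + 1)) v = (ψ ^ (n : ℤ)) (ψ v) := by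
          rw [zpow_add_one, MulAut.mul_apply]
        rw [hsplit, ih (ψ v), c1 v, zpow_add_one]
        group
      | pred n ih =>
        intro v
        have hsplit : (ψ ^ (-(n : ℤ) - 1)) v = (ψ ^ (-(n : ℤ))) (ψ⁻¹ v) := by
          rw [zpow_sub_one, MulAut.mul_apply]
        rw [hsplit, ih (ψ⁻¹ v), c1' v, zpow_sub_one]
        group
    -- the lifted homomorphism
    set f₁ : V →* MappingTorus φ.toMonoidHom := b.comp V.subtype with hf₁
    set f₂ : Multiplicative ℤ →* MappingTorus φ.toMonoidHom :=
      zpowersHom (MappingTorus φ.toMonoidHom) s with hf₂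
    have hcompat : ∀ z : Multiplicative ℤ,
        f₁.comp ((zpowersHom (MulAut V) ψ z).toMonoidHom)
          = (MulAut.conj (f₂ z)).toMonoidHom.comp f₁ := by
      intro z
      ext v
      show b ↑((ψ ^ (Multiplicative.toAdd z)) v)
        = MulAut.conj (s ^ (Multiplicative.toAdd z)) (b ↑v)
      rw [MulAut.conj_apply]
      exact czv (Multiplicative.toAdd z) v
    set Φ := SemidirectProduct.lift f₁ f₂ hcompat with hΦ
    have hΦsplit : ∀ p, Φ p = b ↑p.left * s ^ (Multiplicative.toAdd p.right) := by
      intro p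
      conv_lhs => rw [← SemidirectProduct.inl_left_mul_inr_right p]
      rw [map_mul, SemidirectProduct.lift_inl, SemidirectProduct.lift_inr]
      rfl
    have hmtZs : mtZ φ s = Multiplicative.ofAdd (m : ℤ) := by
      rw [hs, map_mul, hb, mtZ_base, map_pow, ht, mtZ_stable, one_mul]
      simp [← ofAdd_nsmul]
    have hinj : Function.Injective Φ := by
      rw [injective_iff_map_eq_one]
      intro p hp
      have h1 := congrArg (mtZ φ) hp
      rw [hΦsplit p, map_one, map_mul, hb, mtZ_base, map_zpow, hmtZs, one_mul] at h1
      have hz : Multiplicative.toAdd p.right * (m : ℤ) = 0 := by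
        have := congrArg Multiplicative.toAdd h1
        simpa [mul_comm] using this
      have hz0 : Multiplicative.toAdd p.right = 0 := by
        rcases mul_eq_zero.mp hz with h | h
        · exact h
        · exfalso; omega
      have hright : p.right = 1 := by
        have : Multiplicative.ofAdd (Multiplicative.toAdd p.right) = Multiplicative.ofAdd 0 :=
          congrArg Multiplicative.ofAdd hz0
        simpa using this
      have hleft : b ↑p.left = 1 := by
        have h2 := hΦsplit p
        rw [hz0, zpow_zero, mul_one, hp] at h2
        exact h2.symm
      have hleft1 : p.left = 1 := by
        have : (↑p.left : FreeGroup α) = 1 := base_inj φ (by rw [hleft, map_one])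
        exact Subtype.ext this
      rcases p with ⟨pl, pr⟩
      simp only at hleft1 hright
      rw [hleft1, hright]
      rfl
    have hrange : Φ.range = Subgroup.closure
        (insert s ((V.map b : Subgroup (MappingTorus φ.toMonoidHom)) :
          Set (MappingTorus φ.toMonoidHom))) := by
      apply le_antisymm
      · rintro g ⟨p, rfl⟩
        rw [hΦsplit p]
        apply Subgroup.mul_mem
        · apply Subgroup.subset_closure
          apply Set.mem_insert_of_mem
          exact ⟨↑p.left, p.left.2, rfl⟩
        · exact Subgroup.zpow_mem _ (Subgroup.subset_closure (Set.mem_insert _ _)) _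
      · rw [Subgroup.closure_le]
        rintro g (rfl | ⟨v, hv, rfl⟩)
        · refine ⟨SemidirectProduct.inr (Multiplicative.ofAdd 1), ?_⟩
          rw [SemidirectProduct.lift_inr]
          show s ^ (Multiplicative.toAdd (Multiplicative.ofAdd (1 : ℤ))) = s
          rw [toAdd_ofAdd, zpow_one]
        · refine ⟨SemidirectProduct.inl ⟨v, hv⟩, ?_⟩
          rw [SemidirectProduct.lift_inl]
          rfl
    refine ⟨(MonoidHom.ofInjective hinj).trans (MulEquiv.subgroupCongr hrange), ?_, ?_⟩
    · intro y
      rw [MulEquiv.trans_apply, MulEquiv.subgroupCongr_apply]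
      show (Φ (SemidirectProduct.inl y) : MappingTorus φ.toMonoidHom) = b ↑y
      rw [SemidirectProduct.lift_inl]
      rfl
    · rw [MulEquiv.trans_apply, MulEquiv.subgroupCongr_apply]
      show (Φ (SemidirectProduct.inr (Multiplicative.ofAdd 1)) : MappingTorus φ.toMonoidHom) = s
      rw [SemidirectProduct.lift_inr]
      show s ^ (Multiplicative.toAdd (Multiplicative.ofAdd (1 : ℤ))) = s
      rw [toAdd_ofAdd, zpow_one]
end
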